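/- The simplicial m-sphere S^m = Δ[m]/∂Δ[m] is a coalgebra over the m-th filtration stage L_m of the lattice path operad in the category of finite pointed sets with wedge product: for every x ∈ L(n₁,...,n_k;n) with complexity c(x) ≤ m and every y ∈ (S^m)_n, the tuple (x₁*(y),...,x_k*(y)) lies in the wedge (S^m)_{n₁} ∨ ... ∨ (S^m)_{n_k}, i.e. at most one of the xᵢ*(y) is different from the basepoint. -/

import Mathlib

/-- Number of alternations (changes of letter) along a word. -/
def altCountF {α : Type*} [DecidableEq α] : List α → ℕ
  | [] => 0
  | [_] => 0
  | a :: b :: rest => (if a = b then 0 else 1) + altCountF (b :: rest)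

/-- The individual complexity index `c_{ij}` of a word. -/
def complexityIdxF {α : Type*} [DecidableEq α] (w : List α) (a b : α) : ℕ :=
  altCountF (w.filter (fun c => c = a ∨ c = b))

lemma altCountF_cons_ge {α : Type*} [DecidableEq α] (a : α) (t : List α) :
    altCountF t ≤ altCountF (a :: t) := by
  cases t with
  | nil => simp [altCountF]
  | cons b r => simp [altCountF]

lemma altCountF_append {α : Type*} [DecidableEq α] (s t : List α) :
    altCountF s + altCountF t ≤ altCountF (s ++ t) := by
  induction s with
  | nil => simp [altCountF]
  | cons a s ih =>
    cases s with
    | nil => simpa [altCountF] using altCountF_cons_ge a t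
    | cons b r =>
      have : altCountF (a :: b :: r ++ t) =
          (if a = b then 0 else 1) + altCountF (b :: r ++ t) := rfl
      simp only [altCountF, List.cons_append] at *
      omega

lemma eq_of_altCountF_eq_zero {α : Type*} [DecidableEq α] :
    ∀ (l : List α), altCountF l = 0 → ∀ x ∈ l, ∀ y ∈ l, x = y := by
  intro l
  induction l with
  | nil => simp
  | cons a t ih =>
    cases t with
    | nil => simp
    | cons b r =>
      intro h x hx y hy
      have hab : a = b ∧ altCountF (b :: r) = 0 := by
        by_cases hab : a = b <;> simp [altCountF, hab] at h ⊢
        exact h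
      have key : ∀ z ∈ a :: b :: r, z ∈ b :: r := by
        intro z hz
        rcases List.mem_cons.1 hz with h1 | h1
        · subst h1; rw [hab.1]; exact List.mem_cons_self
        · exact h1
      exact ih hab.2 x (key x hx) y (key y hy)

lemma one_le_altCountF {α : Type*} [DecidableEq α] {l : List α} {a b : α}
    (ha : a ∈ l) (hb : b ∈ l) (hab : a ≠ b) : 1 ≤ altCountF l := by
  by_contra h
  exact hab (eq_of_altCountF_eq_zero l (by omega) a ha b hb)

lemma dropWhile_gt {α : Type*} (M : ℕ) :
    ∀ l : List (α × ℕ), (l.map Prod.snd).Pairwise (· ≤ ·) →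
      ∀ p ∈ l.dropWhile (fun p => p.2 ≤ M), M < p.2 := by
  intro l
  induction l with
  | nil => simp
  | cons a t ih =>
    intro hs p hp
    rw [List.map_cons] at hs
    have hs' := List.pairwise_cons.1 hs
    by_cases h : a.2 ≤ M
    · rw [List.dropWhile_cons_of_pos (by simpa using h)] at hp
      exact ih hs'.2 p hp
    · rw [List.dropWhile_cons_of_neg (by simpa using h)] at hp
      rcases List.mem_cons.1 hp with h1 | h1
      · subst h1; omega
      · have : a.2 ≤ p.2 := hs'.1 _ (List.mem_map_of_mem (f := Prod.snd) h1)
        omega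

lemma key_lemma {α : Type*} [DecidableEq α] {i j : α} (hij : i ≠ j) :
    ∀ (M : ℕ) (l : List (α × ℕ)),
      (l.map Prod.snd).Pairwise (· ≤ ·) →
      (∀ v ≤ M, (i, v) ∈ l) →
      (∀ v ≤ M, (j, v) ∈ l) →
      M + 1 ≤ altCountF (l.map Prod.fst) := by
  intro M
  induction M with
  | zero =>
    intro l _ hi hj
    exact one_le_altCountF (List.mem_map_of_mem (f := Prod.fst) (hi 0 le_rfl))
      (List.mem_map_of_mem (f := Prod.fst) (hj 0 le_rfl)) hij
  | succ M ih =>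
    intro l hs hi hj
    obtain ⟨l1, l2, hl1, hl2⟩ :
        ∃ l1 l2, l1 = l.takeWhile (fun p => p.2 ≤ M) ∧ l2 = l.dropWhile (fun p => p.2 ≤ M) :=
      ⟨_, _, rfl, rfl⟩
    have hsplit : l1 ++ l2 = l := by
      rw [hl1, hl2]; exact List.takeWhile_append_dropWhile
    have h1 : ∀ p ∈ l1, p.2 ≤ M := by
      intro p hp
      rw [hl1] at hp
      simpa using List.mem_takeWhile_imp hp
    have h2 : ∀ p ∈ l2, M < p.2 := by
      rw [hl2]; exact dropWhile_gt M l hs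
    have hmem1 : ∀ v ≤ M, ∀ c : α, (c, v) ∈ l → (c, v) ∈ l1 := by
      intro v hv c hcv
      rw [← hsplit] at hcv
      rcases List.mem_append.1 hcv with h | h
      · exact h
      · exact absurd (h2 _ h) (by simpa using hv)
    have hmem2 : ∀ c : α, (c, M + 1) ∈ l → (c, M + 1) ∈ l2 := by
      intro c hcv
      rw [← hsplit] at hcv
      rcases List.mem_append.1 hcv with h | h
      · exact absurd (h1 _ h) (by omega)
      · exact h
    have hs1 : (l1.map Prod.snd).Pairwise (· ≤ ·) := by
      refine hs.sublist (List.Sublist.map _ ?_)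
      rw [← hsplit]; exact List.sublist_append_left _ _
    have hIH : M + 1 ≤ altCountF (l1.map Prod.fst) :=
      ih l1 hs1 (fun v hv => hmem1 v hv i (hi v (by omega)))
        (fun v hv => hmem1 v hv j (hj v (by omega)))
    have h12 : 1 ≤ altCountF (l2.map Prod.fst) :=
      one_le_altCountF (List.mem_map_of_mem (f := Prod.fst) (hmem2 i (hi _ le_rfl)))
        (List.mem_map_of_mem (f := Prod.fst) (hmem2 j (hj _ le_rfl))) hij
    calc M + 1 + 1 ≤ altCountF (l1.map Prod.fst) + altCountF (l2.map Prod.fst) := by omega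
    _ ≤ altCountF (l1.map Prod.fst ++ l2.map Prod.fst) := altCountF_append _ _
    _ = altCountF (l.map Prod.fst) := by rw [← List.map_append, hsplit]

theorem sphere_is_Lm_coalgebra (k n m : ℕ) (w : List (Fin k × Fin (n+1)))
    (hsort : (w.map Prod.snd).Pairwise (· ≤ ·))
    (y : Fin (n+1) →o Fin (m+1))
    (hc : ∀ i j : Fin k, i ≠ j → complexityIdxF (w.map Prod.fst) i j ≤ m) :
    ∀ i j : Fin k, i ≠ j →
      ¬((∀ v : Fin (m+1), ∃ p ∈ w, p.1 = i ∧ y p.2 = v) ∧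
        (∀ v : Fin (m+1), ∃ p ∈ w, p.1 = j ∧ y p.2 = v)) := by
  intro i j hij ⟨hi, hj⟩
  set P : Fin k × Fin (n+1) → Bool := fun p => decide (p.1 = i ∨ p.1 = j) with hP
  set l : List (Fin k × ℕ) := (w.filter P).map (fun p => (p.1, ((y p.2 : Fin (m+1)) : ℕ))) with hl
  have hs : (l.map Prod.snd).Pairwise (· ≤ ·) := by
    have hsub : ((w.filter P).map Prod.snd).Pairwise (· ≤ ·) :=
      hsort.sublist (List.Sublist.map _ (List.filter_sublist (l := w)))
    have : l.map Prod.snd = ((w.filter P).map Prod.snd).map (fun b => ((y b : Fin (m+1)) : ℕ)) := by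
      simp [hl, List.map_map, Function.comp]
    rw [this]
    exact List.Pairwise.map _ (fun a b hab => by
      exact_mod_cast y.monotone hab) hsub
  have hmem : ∀ (c : Fin k), (∀ v : Fin (m+1), ∃ p ∈ w, p.1 = c ∧ y p.2 = v) →
      (c = i ∨ c = j) → ∀ v ≤ m, (c, v) ∈ l := by
    intro c hcov hcij v hv
    obtain ⟨p, hpw, hp1, hp2⟩ := hcov ⟨v, by omega⟩
    refine List.mem_map.2 ⟨p, List.mem_filter.2 ⟨hpw, by simp [hP, hp1, hcij]⟩, ?_⟩
    rw [hp1, hp2]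
  have hkey : m + 1 ≤ altCountF (l.map Prod.fst) :=
    key_lemma hij m l hs (hmem i hi (Or.inl rfl)) (hmem j hj (Or.inr rfl))
  have heq : l.map Prod.fst = (w.map Prod.fst).filter (fun c => c = i ∨ c = j) := by
    rw [List.filter_map]
    simp only [hl, List.map_map, Function.comp_def, hP]
  have := hc i j hij
  rw [complexityIdxF, ← heq] at this
  omega
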